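/- Let A be a local Artinian ring with residue field k. Suppose J^{-1} → J^0 → J^1 is an exact sequence of flat A-modules such that H^0(J ⊗_A k) = 0 (cohomology at the middle spot of the reduction vanishes). Then for every A-module M, H^0(J ⊗_A M) = 0. -/

import Mathlib

open LinearMap TensorProduct IsLocalRing

universe u

section Aux

variable {A : Type u} [CommRing A]
  {Jneg J0 J1 : Type u}
  [AddCommGroup Jneg] [Module A Jneg]
  [AddCommGroup J0] [Module A J0]
  [AddCommGroup J1] [Module A J1]
  (dneg : Jneg →ₗ[A] J0) (d0 : J0 →ₗ[A] J1)

/-- Auxiliary predicate: middle cohomology of `J ⊗ M` vanishes. -/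
def StmtGood (M : Type u) [AddCommGroup M] [Module A M] : Prop :=
  ∀ x ∈ LinearMap.ker (LinearMap.rTensor M d0),
    x ∈ LinearMap.range (LinearMap.rTensor M dneg)

lemma stmt_comm {M N : Type u} [AddCommGroup M] [Module A M] [AddCommGroup N] [Module A N]
    {X Y : Type u} [AddCommGroup X] [Module A X] [AddCommGroup Y] [Module A Y]
    (g : M →ₗ[A] N) (d : X →ₗ[A] Y) (t : X ⊗[A] M) :
    rTensor N d (lTensor X g t) = lTensor Y g (rTensor M d t) := by
  rw [← LinearMap.comp_apply, ← LinearMap.comp_apply, rTensor_comp_lTensor,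
    lTensor_comp_rTensor]

lemma StmtGood.of_equiv {M M₂ : Type u} [AddCommGroup M] [Module A M]
    [AddCommGroup M₂] [Module A M₂]
    (h : StmtGood dneg d0 M) (e : M₂ ≃ₗ[A] M) : StmtGood dneg d0 M₂ := by
  intro x hx
  have h1 : rTensor M d0 (lTensor J0 (e : M₂ →ₗ[A] M) x) = 0 := by
    rw [stmt_comm, LinearMap.mem_ker.mp hx, map_zero]
  obtain ⟨y, hy⟩ := h _ (LinearMap.mem_ker.mpr h1)
  refine ⟨lTensor Jneg (e.symm : M →ₗ[A] M₂) y, ?_⟩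
  rw [stmt_comm, hy, ← LinearMap.comp_apply, ← lTensor_comp]
  simp

lemma StmtGood.of_exact [Module.Flat A J1] (hc : d0 ∘ₗ dneg = 0)
    {M' M M'' : Type u} [AddCommGroup M'] [Module A M'] [AddCommGroup M] [Module A M]
    [AddCommGroup M''] [Module A M'']
    (f : M' →ₗ[A] M) (g : M →ₗ[A] M'')
    (hf : Function.Injective f) (hg : Function.Surjective g)
    (hfg : Function.Exact f g)
    (h' : StmtGood dneg d0 M') (h'' : StmtGood dneg d0 M'') :
    StmtGood dneg d0 M := by
  intro x hx
  have hx0 : rTensor M d0 x = 0 := LinearMap.mem_ker.mp hx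
  have h1 : rTensor M'' d0 (lTensor J0 g x) = 0 := by
    rw [stmt_comm, hx0, map_zero]
  obtain ⟨ybar, hybar⟩ := h'' _ (LinearMap.mem_ker.mpr h1)
  obtain ⟨y, rfl⟩ := lTensor_surjective Jneg hg ybar
  have h2 : lTensor J0 g (x - rTensor M dneg y) = 0 := by
    rw [map_sub, ← stmt_comm, hybar, sub_self]
  obtain ⟨w, hw⟩ := ((lTensor_exact J0 hfg hg) (x - rTensor M dneg y)).mp h2
  have h3 : rTensor M d0 (x - rTensor M dneg y) = 0 := by
    rw [map_sub, hx0, ← LinearMap.comp_apply, ← rTensor_comp, hc, rTensor_zero]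
    simp
  have h4 : rTensor M' d0 w = 0 := by
    apply Module.Flat.lTensor_preserves_injective_linearMap f hf
    rw [map_zero, ← stmt_comm, hw]
    exact h3
  obtain ⟨w', hw'⟩ := h' _ (LinearMap.mem_ker.mpr h4)
  refine ⟨y + lTensor Jneg f w', ?_⟩
  rw [map_add, stmt_comm, hw', hw]
  abel

variable [IsLocalRing A]

lemma stmtGood_finsupp (hk : StmtGood dneg d0 (ResidueField A)) (ι : Type u) :
    StmtGood dneg d0 (ι →₀ ResidueField A) := by
  classical
  set k := ResidueField A
  intro x hx
  have hx0 : rTensor (ι →₀ k) d0 x = 0 := LinearMap.mem_ker.mp hx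
  have hker : ∀ i : ι, rTensor k d0 (finsuppRight A A J0 k ι x i) = 0 := by
    intro i
    rw [finsuppRight_apply, stmt_comm, hx0, map_zero]
  have hex : ∀ i : ι, ∃ v : Jneg ⊗[A] k,
      rTensor k dneg v = finsuppRight A A J0 k ι x i ∧
      (finsuppRight A A J0 k ι x i = 0 → v = 0) := by
    intro i
    by_cases h : finsuppRight A A J0 k ι x i = 0
    · exact ⟨0, by simp [h], fun _ => rfl⟩
    · obtain ⟨v, hv⟩ := hk _ (LinearMap.mem_ker.mpr (hker i))
      exact ⟨v, hv, fun h' => absurd h' h⟩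
  choose v hv1 hv2 using hex
  set z : ι →₀ Jneg ⊗[A] k := Finsupp.onFinset (finsuppRight A A J0 k ι x).support v
    (fun i h => Finsupp.mem_support_iff.mpr fun h0 => h (hv2 i h0)) with hz
  refine ⟨(finsuppRight A A Jneg k ι).symm z, ?_⟩
  apply (finsuppRight A A J0 k ι).injective
  ext i
  rw [finsuppRight_apply, ← stmt_comm, ← finsuppRight_apply (S := A), LinearEquiv.apply_symm_apply]
  show rTensor k dneg (z i) = _
  rw [hz, Finsupp.onFinset_apply]
  exact hv1 i

lemma stmtGood_of_torsionBy_max (hk : StmtGood dneg d0 (ResidueField A))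
    (M : Type u) [AddCommGroup M] [Module A M]
    (hM : Module.IsTorsionBySet A M (maximalIdeal A)) :
    StmtGood dneg d0 M := by
  letI : Module (ResidueField A) M := hM.module
  haveI : IsScalarTower A (ResidueField A) M := hM.isScalarTower
  let b := Module.Basis.ofVectorSpace (ResidueField A) M
  exact (stmtGood_finsupp dneg d0 hk _).of_equiv dneg d0 (b.repr.restrictScalars A)

lemma stmtGood_of_torsionBy_pow [Module.Flat A J1] (hc : d0 ∘ₗ dneg = 0)
    (hk : StmtGood dneg d0 (ResidueField A)) :
    ∀ (j : ℕ) (M : Type u) [AddCommGroup M] [Module A M],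
      Module.IsTorsionBySet A M ((maximalIdeal A ^ j : Ideal A) : Set A) →
      StmtGood dneg d0 M := by
  intro j
  induction j with
  | zero =>
    intro M _ _ hM x _
    have hid : (LinearMap.id : M →ₗ[A] M) = 0 := by
      ext m
      have h1 : (1 : A) • m = 0 := @hM m ⟨1, by simp⟩
      simpa using h1
    refine ⟨0, ?_⟩
    rw [map_zero]
    have : x = lTensor J0 (LinearMap.id : M →ₗ[A] M) x := by rw [lTensor_id]; rfl
    rw [this, hid, lTensor_zero]
    rfl
  | succ j ih =>
    intro M _ _ hM
    set N : Submodule A M := (maximalIdeal A) • ⊤ with hN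
    have hN' : Module.IsTorsionBySet A N ((maximalIdeal A ^ j : Ideal A) : Set A) := by
      rintro ⟨m, hm⟩ ⟨a, ha⟩
      apply Subtype.ext
      show a • m = 0
      refine Submodule.smul_induction_on hm ?_ ?_
      · intro r hr y _
        rw [smul_smul]
        have harm : a * r ∈ (maximalIdeal A ^ (j + 1) : Ideal A) := by
          rw [pow_succ]
          exact Ideal.mul_mem_mul ha hr
        exact @hM y ⟨a * r, harm⟩
      · intro y z hy hz
        rw [smul_add, hy, hz, add_zero]
    have hQ : Module.IsTorsionBySet A (M ⧸ N) (maximalIdeal A) :=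
      Module.isTorsionBySet_quotient_ideal_smul M (maximalIdeal A)
    exact StmtGood.of_exact dneg d0 hc N.subtype N.mkQ
      (Submodule.injective_subtype N) (Submodule.mkQ_surjective N)
      (LinearMap.exact_subtype_mkQ N) (ih N hN')
      (stmtGood_of_torsionBy_max dneg d0 hk _ hQ)

end Aux

/-- Let `A` be a local Artinian ring with residue field `k`,
and `J⁻¹ → J⁰ → J¹` a complex of flat `A`-modules whose middle cohomology
vanishes after tensoring with `k`.  Then for every `A`-module `M` the middle
cohomology of `J ⊗ M` vanishes. -/
theorem stmt4 {A : Type u} [CommRing A] [IsLocalRing A] [IsArtinianRing A]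
    {Jneg J0 J1 : Type u}
    [AddCommGroup Jneg] [Module A Jneg] [Module.Flat A Jneg]
    [AddCommGroup J0] [Module A J0] [Module.Flat A J0]
    [AddCommGroup J1] [Module A J1] [Module.Flat A J1]
    (dneg : Jneg →ₗ[A] J0) (d0 : J0 →ₗ[A] J1)
    (hcomplex : d0 ∘ₗ dneg = 0)
    (hk : ∀ x ∈ LinearMap.ker (LinearMap.rTensor (IsLocalRing.ResidueField A) d0),
      x ∈ LinearMap.range (LinearMap.rTensor (IsLocalRing.ResidueField A) dneg)) :
    ∀ (M : Type u) [AddCommGroup M] [Module A M],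
      ∀ x ∈ LinearMap.ker (LinearMap.rTensor M d0),
        x ∈ LinearMap.range (LinearMap.rTensor M dneg) := by
  intro M _ _
  obtain ⟨n, hn⟩ := IsArtinianRing.isNilpotent_jacobson_bot (R := A)
  have hmax : (IsLocalRing.maximalIdeal A) ^ n = ⊥ := by
    rw [← IsLocalRing.jacobson_eq_maximalIdeal (⊥ : Ideal A) bot_ne_top]
    exact hn
  refine stmtGood_of_torsionBy_pow dneg d0 hcomplex hk n M ?_
  rintro m ⟨a, ha⟩
  rw [hmax] at ha
  have : a = 0 := by simpa using ha
  simp [this]
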